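/- In the Decouple procedure, the set of selected moves M satisfies: no selected move has its source community equal to the target community of another selected move, and no selected move has its target community equal to the source community of another selected move; equivalently, the set of source communities of M and the set of target communities of M are disjoint (assuming every candidate move has c_from ≠ c_to). -/

import Mathlib

open Finset

/-- The Decouple procedure: process candidate moves `(u, c_from, c_to, r)` in
order, maintaining the sets of emitter (`Cf`) and acceptor (`Ct`) communities;
stop as soon as a move's source community is already an acceptor or its target
community is already an emitter. -/
def decouple {U C : Type*} [DecidableEq C] :
    List (U × C × C × ℝ) → Finset C → Finset C → List (U × C × C × ℝ)
  | [], _, _ => []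
  | (m :: rest), Cf, Ct =>
    if m.2.1 ∈ Ct ∨ m.2.2.1 ∈ Cf then []
    else m :: decouple rest (insert m.2.1 Cf) (insert m.2.2.1 Ct)

lemma decouple_avoid {U C : Type*} [DecidableEq C] :
    ∀ (l : List (U × C × C × ℝ)) (Cf Ct : Finset C),
      ∀ m ∈ decouple l Cf Ct, m.2.1 ∉ Ct ∧ m.2.2.1 ∉ Cf := by
  intro l
  induction l with
  | nil => intro Cf Ct m hm; simp [decouple] at hm
  | cons a rest ih =>
    intro Cf Ct m hm
    rw [decouple] at hm
    split at hm
    · simp at hm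
    · next h =>
      push_neg at h
      rcases List.mem_cons.mp hm with rfl | hm'
      · exact h
      · have := ih _ _ m hm'
        exact ⟨fun hc => this.1 (Finset.mem_insert_of_mem hc),
               fun hc => this.2 (Finset.mem_insert_of_mem hc)⟩

lemma decouple_main {U C : Type*} [DecidableEq C] :
    ∀ (l : List (U × C × C × ℝ)) (Cf Ct : Finset C),
      (∀ m ∈ l, m.2.1 ≠ m.2.2.1) →
      ∀ m₁ ∈ decouple l Cf Ct, ∀ m₂ ∈ decouple l Cf Ct, m₁.2.1 ≠ m₂.2.2.1 := by
  intro l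
  induction l with
  | nil => intro Cf Ct _ m₁ hm₁; simp [decouple] at hm₁
  | cons a rest ih =>
    intro Cf Ct hne m₁ hm₁ m₂ hm₂
    rw [decouple] at hm₁ hm₂
    by_cases h : a.2.1 ∈ Ct ∨ a.2.2.1 ∈ Cf
    · simp [h] at hm₁
    · rw [if_neg h] at hm₁ hm₂
      rcases List.mem_cons.mp hm₁ with rfl | h₁ <;>
      rcases List.mem_cons.mp hm₂ with h2 | h₂
      · subst h2; exact hne _ List.mem_cons_self
      · intro hc
        exact (decouple_avoid rest _ _ m₂ h₂).2 (hc ▸ Finset.mem_insert_self _ _)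
      · subst h2
        intro hc
        exact (decouple_avoid rest _ _ m₁ h₁).1 (hc ▸ Finset.mem_insert_self _ _)
      · exact ih _ _ (fun m hm => hne m (List.mem_cons_of_mem _ hm)) m₁ h₁ m₂ h₂

theorem decouple_sources_targets_disjoint {U C : Type*} [DecidableEq C]
    (l : List (U × C × C × ℝ)) (hne : ∀ m ∈ l, m.2.1 ≠ m.2.2.1) :
    ∀ m₁ ∈ decouple l ∅ ∅, ∀ m₂ ∈ decouple l ∅ ∅, m₁.2.1 ≠ m₂.2.2.1 := by
  exact decouple_main l ∅ ∅ hne
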